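/- Let c be a real symmetric 3×3 matrix with three pairwise distinct eigenvalues (orthotropic) and let p be a harmonic homogeneous polynomial of degree 4 in three real variables (Δp = 0), representing a fourth-order harmonic tensor H. For a symmetric matrix m, let q_m denote the quadratic polynomial q_m(x) := Σ_{k,l} m_{kl}·(∂ₖ∂ₗ p)(x), which represents the second-order covariant H : m (up to a constant factor). Then for every g ∈ SO(3): [g c gᵀ = c and g fixes q_c and g fixes q_{c²}] holds if and only if [g fixes p and g c gᵀ = c]; in other words the stabilizer of the triple (c, H:c, H:c²) equals the stabilizer of the pair (H, c). -/

import Mathlib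

open Matrix MvPolynomial

/-- The rotation group `SO(3)` as a set of real `3 × 3` matrices. -/
def SO3 : Set (Matrix (Fin 3) (Fin 3) ℝ) := {g | g * gᵀ = 1 ∧ g.det = 1}

/-- The Laplacian of a polynomial in three variables. -/
noncomputable def lap (p : MvPolynomial (Fin 3) ℝ) : MvPolynomial (Fin 3) ℝ :=
  ∑ i, pderiv i (pderiv i p)

/-- The quadratic polynomial `q_m(x) = Σ_{k,l} m_{kl} (∂ₖ∂ₗ p)(x)`, realizing the
second-order covariant `H : m` up to a constant factor. -/
noncomputable def qm (p : MvPolynomial (Fin 3) ℝ) (m : Matrix (Fin 3) (Fin 3) ℝ) :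
    MvPolynomial (Fin 3) ℝ :=
  ∑ k, ∑ l, C (m k l) * pderiv k (pderiv l p)

/-- `g ∈ SO(3)` fixes the polynomial `q`, i.e. `q(g⁻¹·x) = q(x)` for all `x`. -/
def fixesPoly (g : Matrix (Fin 3) (Fin 3) ℝ) (q : MvPolynomial (Fin 3) ℝ) : Prop :=
  ∀ x : Fin 3 → ℝ, eval (g⁻¹.mulVec x) q = eval x q

/-! ### Auxiliary machinery -/

/-- Substitution of a linear change of variables into a polynomial. -/
noncomputable def subst (A : Matrix (Fin 3) (Fin 3) ℝ) :
    MvPolynomial (Fin 3) ℝ →ₐ[ℝ] MvPolynomial (Fin 3) ℝ :=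
  aeval (fun i => ∑ j, C (A i j) * X j)

lemma eval_subst (A : Matrix (Fin 3) (Fin 3) ℝ) (q : MvPolynomial (Fin 3) ℝ)
    (x : Fin 3 → ℝ) : eval x (subst A q) = eval (A.mulVec x) q := by
  have h := eval₂_comp_left (eval x) (algebraMap ℝ (MvPolynomial (Fin 3) ℝ))
    (fun i => ∑ j, C (A i j) * X j) q
  rw [subst, aeval_def, h]
  rw [show ((eval x).comp (algebraMap ℝ (MvPolynomial (Fin 3) ℝ))) = RingHom.id ℝ by
    ext r; simp]
  rw [eval₂_id]
  have hfun : (⇑(eval x) ∘ fun i => ∑ j, C (A i j) * X j) = A.mulVec x := by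
    funext i; simp [mulVec, dotProduct]
  rw [hfun]

lemma subst_subst (A B : Matrix (Fin 3) (Fin 3) ℝ) (q : MvPolynomial (Fin 3) ℝ) :
    subst A (subst B q) = subst (B * A) q := by
  apply MvPolynomial.funext
  intro x
  simp [eval_subst, Matrix.mulVec_mulVec]

lemma subst_one (q : MvPolynomial (Fin 3) ℝ) : subst 1 q = q := by
  apply MvPolynomial.funext
  intro x
  simp [eval_subst]

lemma subst_C (A : Matrix (Fin 3) (Fin 3) ℝ) (r : ℝ) : subst A (C r) = C r := by
  simp [subst]

lemma fixes_iff (g : Matrix (Fin 3) (Fin 3) ℝ) (q : MvPolynomial (Fin 3) ℝ) :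
    fixesPoly g q ↔ subst g⁻¹ q = q := by
  constructor
  · intro h
    apply MvPolynomial.funext
    intro x
    rw [eval_subst]
    exact h x
  · intro h x
    conv_rhs => rw [← h]
    rw [eval_subst]

lemma pderiv_subst (A : Matrix (Fin 3) (Fin 3) ℝ) (k : Fin 3) (q : MvPolynomial (Fin 3) ℝ) :
    pderiv k (subst A q) = ∑ i, C (A i k) * subst A (pderiv i q) := by
  induction q using MvPolynomial.induction_on with
  | C a => simp [subst]
  | add f g hf hg =>
      simp only [map_add, hf, hg, mul_add, Finset.sum_add_distrib]
  | mul_X f j hf =>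
      have hXj : subst A (X j) = ∑ m, C (A j m) * X m := by simp [subst]
      have hdXj : pderiv k ((subst A) (X j)) = C (A j k) := by
        rw [hXj]
        simp [pderiv_X, Pi.single_apply, Finset.sum_ite_eq', mul_comm]
      have hder : ∀ i : Fin 3, pderiv i (f * X j) =
          pderiv i f * X j + f * (if j = i then 1 else 0) := by
        intro i
        rw [pderiv_mul, pderiv_X, Pi.single_apply]
      rw [_root_.map_mul, pderiv_mul, hf, hdXj]
      simp only [hder, mul_ite, mul_one, mul_zero, _root_.map_add, _root_.map_mul, mul_add,
        Finset.sum_add_distrib, Finset.sum_mul]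
      congr 1
      · apply Finset.sum_congr rfl
        intro i _
        ring
      · rw [Finset.sum_eq_single j]
        · simp [hXj, mul_comm, mul_left_comm]
        · intro i _ hij
          rw [if_neg (Ne.symm hij), _root_.map_zero, mul_zero]
        · simp

lemma pderiv2_subst (A : Matrix (Fin 3) (Fin 3) ℝ) (k l : Fin 3)
    (q : MvPolynomial (Fin 3) ℝ) :
    pderiv k (pderiv l (subst A q)) =
      ∑ i, ∑ j, C (A i k * A j l) * subst A (pderiv i (pderiv j q)) := by
  rw [pderiv_subst, map_sum]
  have : ∀ j : Fin 3, pderiv k (C (A j l) * subst A (pderiv j q))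
      = ∑ i, C (A i k * A j l) * subst A (pderiv i (pderiv j q)) := by
    intro j
    rw [pderiv_C_mul, pderiv_subst, Finset.mul_sum]
    apply Finset.sum_congr rfl
    intro i _
    rw [_root_.map_mul]
    ring
  simp only [this]
  rw [Finset.sum_comm]

private lemma swap4 (F : Fin 3 → Fin 3 → Fin 3 → Fin 3 → MvPolynomial (Fin 3) ℝ) :
    (∑ k, ∑ l, ∑ i, ∑ j, F k l i j) = ∑ i, ∑ j, ∑ k, ∑ l, F k l i j :=
  calc (∑ k, ∑ l, ∑ i, ∑ j, F k l i j)
      = ∑ k, ∑ i, ∑ l, ∑ j, F k l i j :=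
        Finset.sum_congr rfl (fun _ _ => Finset.sum_comm)
    _ = ∑ i, ∑ k, ∑ l, ∑ j, F k l i j := Finset.sum_comm
    _ = ∑ i, ∑ k, ∑ j, ∑ l, F k l i j :=
        Finset.sum_congr rfl (fun _ _ =>
          Finset.sum_congr rfl (fun _ _ => Finset.sum_comm))
    _ = ∑ i, ∑ j, ∑ k, ∑ l, F k l i j :=
        Finset.sum_congr rfl (fun _ _ => Finset.sum_comm)

/-- The key covariance property of the second-order covariant. -/
lemma qm_subst (A : Matrix (Fin 3) (Fin 3) ℝ) (m : Matrix (Fin 3) (Fin 3) ℝ)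
    (q : MvPolynomial (Fin 3) ℝ) :
    qm (subst A q) m = subst A (qm q (A * m * Aᵀ)) := by
  have hentry : ∀ i j, (A * m * Aᵀ) i j = ∑ k, ∑ l, m k l * (A i k * A j l) := by
    intro i j
    simp only [Matrix.mul_apply, transpose_apply, Finset.sum_mul]
    rw [Finset.sum_comm]
    exact Finset.sum_congr rfl fun k _ => Finset.sum_congr rfl fun l _ => by ring
  unfold qm
  simp only [pderiv2_subst, Finset.mul_sum, map_sum, _root_.map_mul, subst_C, hentry,
    Finset.sum_mul]
  rw [swap4]
  apply Finset.sum_congr rfl; intro i _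
  apply Finset.sum_congr rfl; intro j _
  apply Finset.sum_congr rfl; intro k _
  apply Finset.sum_congr rfl; intro l _
  ring

lemma qm_one (q : MvPolynomial (Fin 3) ℝ) : qm q 1 = lap q := by
  unfold qm lap
  apply Finset.sum_congr rfl
  intro k _
  rw [Finset.sum_eq_single k]
  · simp [Matrix.one_apply]
  · intro l _ hlk
    simp [Matrix.one_apply, Ne.symm hlk]
  · simp

lemma qm_sub (a b : MvPolynomial (Fin 3) ℝ) (m : Matrix (Fin 3) (Fin 3) ℝ) :
    qm (a - b) m = qm a m - qm b m := by
  unfold qm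
  simp [map_sub, mul_sub, Finset.sum_sub_distrib]

lemma qm_combo (q : MvPolynomial (Fin 3) ℝ) (a b d : ℝ) (m n o : Matrix (Fin 3) (Fin 3) ℝ) :
    qm q (a • m + b • n + d • o) = C a * qm q m + C b * qm q n + C d * qm q o := by
  unfold qm
  simp only [Matrix.add_apply, Matrix.smul_apply, smul_eq_mul, map_add, _root_.map_mul,
    Finset.mul_sum, Finset.sum_add_distrib, add_mul]
  refine congrArg₂ (· + ·) ?_ ?_
  · refine congrArg₂ (· + ·) ?_ ?_
    · exact Finset.sum_congr rfl fun k _ => Finset.sum_congr rfl fun l _ => by ring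
    · exact Finset.sum_congr rfl fun k _ => Finset.sum_congr rfl fun l _ => by ring
  · exact Finset.sum_congr rfl fun k _ => Finset.sum_congr rfl fun l _ => by ring

lemma qm_diag_pick (s : MvPolynomial (Fin 3) ℝ) (k : Fin 3) :
    qm s (Matrix.diagonal (fun j => if j = k then (1:ℝ) else 0)) =
      pderiv k (pderiv k s) := by
  unfold qm
  rw [Finset.sum_eq_single k]
  · rw [Finset.sum_eq_single k]
    · simp [Matrix.diagonal_apply]
    · intro l _ hlk
      rw [Matrix.diagonal_apply_ne _ (Ne.symm hlk)]
      simp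
    · simp
  · intro k' _ hk'
    apply Finset.sum_eq_zero
    intro l _
    by_cases hl : k' = l
    · subst hl
      rw [Matrix.diagonal_apply_eq]
      rw [if_neg hk']
      simp
    · rw [Matrix.diagonal_apply_ne _ hl]
      simp
  · simp

lemma subst_homog (A : Matrix (Fin 3) (Fin 3) ℝ) {q : MvPolynomial (Fin 3) ℝ} {n : ℕ}
    (h : q.IsHomogeneous n) : (subst A q).IsHomogeneous n := by
  have := h.aeval (fun i => ∑ j, C (A i j) * X j) (n := 1) (fun i => by
    apply IsHomogeneous.sum
    intro j _
    exact (isHomogeneous_X ℝ j).C_mul _)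
  rwa [one_mul] at this

lemma coeff_pderiv (i : Fin 3) (m : Fin 3 →₀ ℕ) (f : MvPolynomial (Fin 3) ℝ) :
    coeff m (pderiv i f) = (m i + 1 : ℝ) * coeff (m + Finsupp.single i 1) f := by
  induction f using MvPolynomial.induction_on' with
  | add f g hf hg => simp [hf, hg, mul_add]
  | monomial s a =>
    rw [pderiv_monomial, coeff_monomial, coeff_monomial]
    by_cases hs : s = m + Finsupp.single i 1
    · have h1 : s - Finsupp.single i 1 = m := by
        rw [hs]
        ext a
        rw [Finsupp.tsub_apply, Finsupp.add_apply]
        omega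
      have h2 : s i = m i + 1 := by
        rw [hs]; simp
      rw [if_pos h1, if_pos hs, h2]
      push_cast
      ring
    · rw [if_neg hs]
      by_cases hsi : s i = 0
      · by_cases h1 : s - Finsupp.single i 1 = m
        · rw [if_pos h1, hsi]; simp
        · rw [if_neg h1]; simp
      · have hle : Finsupp.single i 1 ≤ s := by
          rw [Finsupp.single_le_iff]
          omega
        have h1 : s - Finsupp.single i 1 ≠ m := by
          intro h
          apply hs
          rw [← h, tsub_add_cancel_of_le hle]
        rw [if_neg h1]
        simp

lemma homog_vanish (s : MvPolynomial (Fin 3) ℝ) (hs : s.IsHomogeneous 4)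
    (h : ∀ k, pderiv k (pderiv k s) = 0) : s = 0 := by
  ext d
  rw [coeff_zero]
  by_contra hd
  have hdeg : d.degree = 4 := by
    by_contra hne
    exact hd (hs.coeff_eq_zero hne)
  have hsum : ∑ k : Fin 3, d k = 4 := by
    rw [← hdeg, Finsupp.degree]
    exact (Finset.sum_subset (Finset.subset_univ _) (by
      intro x _ hx
      simpa using (Finsupp.notMem_support_iff.mp hx))).symm
  have hex : ∃ k : Fin 3, 2 ≤ d k := by
    by_contra hno
    push_neg at hno
    have : ∑ k : Fin 3, d k ≤ ∑ k : Fin 3, 1 := Finset.sum_le_sum fun k _ => by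
      have := hno k; omega
    simp at this
    omega
  obtain ⟨k, hk⟩ := hex
  have h0 : coeff (d - Finsupp.single k 2) (pderiv k (pderiv k s)) = 0 := by
    rw [h k, coeff_zero]
  rw [_root_.coeff_pderiv, _root_.coeff_pderiv] at h0
  have he : d - Finsupp.single k 2 + Finsupp.single k 1 + Finsupp.single k 1 = d := by
    ext a
    by_cases ha : a = k
    · subst ha
      simp [Finsupp.tsub_apply]
      omega
    · simp [Finsupp.tsub_apply, Finsupp.single_apply, Ne.symm ha]
  rw [he] at h0
  set e : Fin 3 →₀ ℕ := d - Finsupp.single k 2 with he'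
  set e2 : Fin 3 →₀ ℕ := e + Finsupp.single k 1 with he2'
  have hpos : ((e k : ℝ) + 1) ≠ 0 := by positivity
  have hpos2 : ((e2 k : ℝ) + 1) ≠ 0 := by positivity
  rcases mul_eq_zero.mp h0 with h1 | h1
  · exact absurd h1 hpos
  · rcases mul_eq_zero.mp h1 with h2 | h2
    · exact absurd h2 hpos2
    · exact hd h2

lemma lagrange3 (lam : Fin 3 → ℝ) (hinj : Function.Injective lam) (k : Fin 3) :
    ∃ α β γ : ℝ, ∀ j : Fin 3, α + β * lam j + γ * lam j ^ 2 =
      if j = k then 1 else 0 := by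
  have hne : ∀ i j : Fin 3, i ≠ j → lam i - lam j ≠ 0 := fun i j h =>
    sub_ne_zero.mpr (fun he => h (hinj he))
  fin_cases k
  · have d1 := hne 0 1 (by decide)
    have d2 := hne 0 2 (by decide)
    refine ⟨lam 1 * lam 2 / ((lam 0 - lam 1) * (lam 0 - lam 2)),
      -(lam 1 + lam 2) / ((lam 0 - lam 1) * (lam 0 - lam 2)),
      1 / ((lam 0 - lam 1) * (lam 0 - lam 2)), ?_⟩
    intro j
    fin_cases j <;> simp <;> field_simp <;> ring
  · have d1 := hne 1 0 (by decide)
    have d2 := hne 1 2 (by decide)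
    refine ⟨lam 0 * lam 2 / ((lam 1 - lam 0) * (lam 1 - lam 2)),
      -(lam 0 + lam 2) / ((lam 1 - lam 0) * (lam 1 - lam 2)),
      1 / ((lam 1 - lam 0) * (lam 1 - lam 2)), ?_⟩
    intro j
    fin_cases j <;> simp <;> field_simp <;> ring
  · have d1 := hne 2 0 (by decide)
    have d2 := hne 2 1 (by decide)
    refine ⟨lam 0 * lam 1 / ((lam 2 - lam 0) * (lam 2 - lam 1)),
      -(lam 0 + lam 1) / ((lam 2 - lam 0) * (lam 2 - lam 1)),
      1 / ((lam 2 - lam 0) * (lam 2 - lam 1)), ?_⟩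
    intro j
    fin_cases j <;> simp <;> field_simp <;> ring

/-- Let `c` be an orthotropic real symmetric `3 × 3` matrix (three
pairwise distinct eigenvalues) and `p` a harmonic homogeneous degree-4 polynomial
representing a fourth-order harmonic tensor `H`. Then for every `g ∈ SO(3)`:
`g` stabilizes the triple `(c, H:c, H:c²)` iff `g` stabilizes the pair `(H, c)`. -/
theorem stabilizer_of_triple_eq_stabilizer_of_pair
    (c : Matrix (Fin 3) (Fin 3) ℝ) (hc : cᵀ = c) (hc3 : (spectrum ℝ c).ncard = 3)
    (p : MvPolynomial (Fin 3) ℝ) (hp : p.IsHomogeneous 4) (hharm : lap p = 0) :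
    ∀ g ∈ SO3,
      ((g * c * gᵀ = c ∧ fixesPoly g (qm p c) ∧ fixesPoly g (qm p (c * c))) ↔
        (fixesPoly g p ∧ g * c * gᵀ = c)) := by
  -- Spectral data
  have hherm : c.IsHermitian := by
    rw [Matrix.IsHermitian, conjTranspose_eq_transpose_of_trivial, hc]
  set lam := hherm.eigenvalues with hlam
  set U : Matrix (Fin 3) (Fin 3) ℝ := (hherm.eigenvectorUnitary : Matrix (Fin 3) (Fin 3) ℝ)
    with hUdef
  have hUmem : U ∈ Matrix.unitaryGroup (Fin 3) ℝ := hherm.eigenvectorUnitary.2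
  have hU1 : U * Uᵀ = 1 := by
    have := Matrix.mem_unitaryGroup_iff.mp hUmem
    rwa [Matrix.star_eq_conjTranspose, conjTranspose_eq_transpose_of_trivial] at this
  have hU2 : Uᵀ * U = 1 := by
    have := Matrix.mem_unitaryGroup_iff'.mp hUmem
    rwa [Matrix.star_eq_conjTranspose, conjTranspose_eq_transpose_of_trivial] at this
  have hspec : c = U * Matrix.diagonal lam * Uᵀ := by
    have := hherm.spectral_theorem
    rwa [Unitary.conjStarAlgAut_apply, Matrix.star_eq_conjTranspose, conjTranspose_eq_transpose_of_trivial,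
      show (RCLike.ofReal ∘ lam : Fin 3 → ℝ) = lam from rfl] at this
  have hsp : spectrum ℝ c = Set.range lam := by
    have hu : IsUnit U := by
      apply (Matrix.isUnit_iff_isUnit_det U).mpr
      have : U.det * U.det = 1 := by
        have := congrArg Matrix.det hU1
        rwa [Matrix.det_mul, Matrix.det_transpose, Matrix.det_one] at this
      exact IsUnit.of_mul_eq_one _ this
    obtain ⟨u, hu'⟩ := hu
    have hinv : (↑u⁻¹ : Matrix (Fin 3) (Fin 3) ℝ) = Uᵀ :=
      Units.inv_eq_of_mul_eq_one_right (by rw [hu']; exact hU1)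
    have hcc : c = (u : Matrix (Fin 3) (Fin 3) ℝ) * (Matrix.diagonal lam) *
        (↑u⁻¹ : Matrix (Fin 3) (Fin 3) ℝ) := by
      rw [hu', hinv]; exact hspec
    rw [hcc, spectrum.units_conjugate, spectrum_diagonal]
  have hinj : Function.Injective lam := by
    rw [hsp] at hc3
    have h1 : Set.range lam = ↑(Finset.image lam Finset.univ) := by
      simp [Finset.coe_image]
    rw [h1, Set.ncard_coe_finset] at hc3
    have := Finset.card_image_iff.mp
      (by rw [hc3]; simp : (Finset.image lam Finset.univ).card = Finset.univ.card)
    intro a b hab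
    exact this (Finset.mem_coe.mpr (Finset.mem_univ a))
      (Finset.mem_coe.mpr (Finset.mem_univ b)) hab
  -- c² in diagonal form
  have hspec2 : c * c = U * (Matrix.diagonal lam * Matrix.diagonal lam) * Uᵀ := by
    rw [hspec]
    simp only [Matrix.mul_assoc]
    rw [← Matrix.mul_assoc Uᵀ U, hU2, Matrix.one_mul]
  -- Spectral projectors as quadratic polynomials in c
  have hproj : ∀ k : Fin 3, ∃ α β γ : ℝ,
      U * Matrix.diagonal (fun j => if j = k then (1:ℝ) else 0) * Uᵀ =
        α • (1 : Matrix (Fin 3) (Fin 3) ℝ) + β • c + γ • (c * c) := by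
    intro k
    obtain ⟨α, β, γ, hlag⟩ := lagrange3 lam hinj k
    refine ⟨α, β, γ, ?_⟩
    have hdiag : Matrix.diagonal (fun j => if j = k then (1:ℝ) else 0) =
        α • (1 : Matrix (Fin 3) (Fin 3) ℝ) + β • Matrix.diagonal lam +
          γ • (Matrix.diagonal lam * Matrix.diagonal lam) := by
      rw [Matrix.diagonal_mul_diagonal]
      ext i j
      by_cases hij : i = j
      · subst hij
        simp only [Matrix.diagonal_apply_eq, Matrix.add_apply, Matrix.smul_apply,
          Matrix.one_apply_eq, smul_eq_mul, mul_one]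
        rw [← hlag i]
        ring
      · simp [Matrix.diagonal_apply_ne _ hij, Matrix.one_apply_ne hij]
    have hdist : ∀ X Y Z : Matrix (Fin 3) (Fin 3) ℝ,
        U * (α • X + β • Y + γ • Z) * Uᵀ =
          α • (U * X * Uᵀ) + β • (U * Y * Uᵀ) + γ • (U * Z * Uᵀ) := by
      intro X Y Z
      simp only [Matrix.mul_add, Matrix.add_mul, Matrix.mul_smul, Matrix.smul_mul]
    rw [hdiag, hdist, Matrix.mul_one, hU1, ← hspec, ← hspec2]
  -- The group element
  intro g hg
  obtain ⟨hg1, _⟩ := hg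
  have hgt : gᵀ * g = 1 := mul_eq_one_comm.mp hg1
  have hginv : g⁻¹ = gᵀ := Matrix.inv_eq_right_inv hg1
  constructor
  · rintro ⟨hgc, hq1, hq2⟩
    refine ⟨?_, hgc⟩
    -- invariance of c under g⁻¹
    have hinvc' : gᵀ * c * g = c := by
      conv_lhs => rw [← hgc]
      rw [← Matrix.mul_assoc, ← Matrix.mul_assoc, hgt, Matrix.one_mul,
        Matrix.mul_assoc, hgt, Matrix.mul_one]
    have hinvc : g⁻¹ * c * g⁻¹ᵀ = c := by
      rw [hginv, Matrix.transpose_transpose]; exact hinvc'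
    have hinvc2 : g⁻¹ * (c * c) * g⁻¹ᵀ = c * c := by
      rw [hginv, Matrix.transpose_transpose]
      have h2 : c * c = (gᵀ * c * g) * (gᵀ * c * g) := by rw [hinvc']
      conv_rhs => rw [h2]
      simp only [Matrix.mul_assoc]
      rw [← Matrix.mul_assoc g gᵀ, hg1, Matrix.one_mul]
    have hinv1 : g⁻¹ * 1 * g⁻¹ᵀ = 1 := by
      rw [hginv, Matrix.transpose_transpose, Matrix.mul_one, hgt]
    set r : MvPolynomial (Fin 3) ℝ := subst g⁻¹ p - p with hrdef
    have hr1 : qm r 1 = 0 := by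
      rw [qm_sub, qm_subst, hinv1, qm_one, hharm, map_zero, sub_zero]
    have hrc : qm r c = 0 := by
      rw [qm_sub, qm_subst, hinvc, (fixes_iff g (qm p c)).mp hq1, sub_self]
    have hrc2 : qm r (c * c) = 0 := by
      rw [qm_sub, qm_subst, hinvc2, (fixes_iff g (qm p (c * c))).mp hq2, sub_self]
    have hrP : ∀ k : Fin 3,
        qm r (U * Matrix.diagonal (fun j => if j = k then (1:ℝ) else 0) * Uᵀ) = 0 := by
      intro k
      obtain ⟨α, β, γ, hP⟩ := hproj k
      rw [hP, qm_combo, hr1, hrc, hrc2]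
      ring
    have hs : ∀ k, pderiv k (pderiv k (subst U r)) = 0 := by
      intro k
      rw [← qm_diag_pick, qm_subst, hrP k, map_zero]
    have hrhom : r.IsHomogeneous 4 := (subst_homog g⁻¹ hp).sub hp
    have hs0 : subst U r = 0 := homog_vanish _ (subst_homog U hrhom) hs
    have hr0 : r = 0 := by
      have h := congrArg (subst Uᵀ) hs0
      rwa [subst_subst, hU1, subst_one, map_zero] at h
    exact (fixes_iff g p).mpr (sub_eq_zero.mp hr0)
  · rintro ⟨hfix, hgc⟩
    have hfix' : subst g⁻¹ p = p := (fixes_iff g p).mp hfix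
    have hinvc' : gᵀ * c * g = c := by
      conv_lhs => rw [← hgc]
      rw [← Matrix.mul_assoc, ← Matrix.mul_assoc, hgt, Matrix.one_mul,
        Matrix.mul_assoc, hgt, Matrix.mul_one]
    have hinvc : g⁻¹ * c * g⁻¹ᵀ = c := by
      rw [hginv, Matrix.transpose_transpose]; exact hinvc'
    have hinvc2 : g⁻¹ * (c * c) * g⁻¹ᵀ = c * c := by
      rw [hginv, Matrix.transpose_transpose]
      have h2 : c * c = (gᵀ * c * g) * (gᵀ * c * g) := by rw [hinvc']
      conv_rhs => rw [h2]
      simp only [Matrix.mul_assoc]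
      rw [← Matrix.mul_assoc g gᵀ, hg1, Matrix.one_mul]
    refine ⟨hgc, ?_, ?_⟩
    · apply (fixes_iff g (qm p c)).mpr
      conv_rhs => rw [← hfix']
      rw [qm_subst, hinvc]
    · apply (fixes_iff g (qm p (c * c))).mpr
      conv_rhs => rw [← hfix']
      rw [qm_subst, hinvc2]
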